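/- Let θ ≥ 2, M a tuple of Yetter-Drinfeld modules over a group G admitting integral Cartan entries, let J, K be disjoint nonempty subsets of {1,…,θ}, and i ∈ J. If a^M_{jk} = 0 for all j ∈ J, k ∈ K (i.e., c² = id on M_j ⊗ M_k), then after the i-th reflection R_i(M), still a^{R_i(M)}_{jk} = 0 for all j ∈ J, k ∈ K. -/

import Mathlib

open scoped TensorProduct

universe u

/-- A bundled `K`-vector space. -/
structure BMod (K : Type u) [Field K] : Type (u + 1) where
  carrier : Type u
  [isAddCommGroup : AddCommGroup carrier]
  [isModule : Module K carrier]

attribute [instance] BMod.isAddCommGroup BMod.isModule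

section YD

variable {K : Type u} [Field K] {G : Type u} [Group G]

/-- The condition `c_{W,V} c_{V,W} = id` on `V ⊗ W` for Yetter–Drinfeld
modules, stated on homogeneous elements: this is exactly the vanishing Cartan
entry condition `a_{VW} = 0`. -/
def CSqId {V W : Type u} [AddCommGroup V] [Module K V]
    [AddCommGroup W] [Module K W]
    (ρV : Representation K G V) (gV : G → Submodule K V)
    (ρW : Representation K G W) (gW : G → Submodule K W) : Prop :=
  ∀ (g h : G) (v : V) (w : W), v ∈ gV g → w ∈ gW h →
    (v ⊗ₜ[K] w : V ⊗[K] W) = (ρV (g * h * g⁻¹) v) ⊗ₜ[K] (ρW g w)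

/-- The `G`-grading of the tensor product of two `G`-graded vector spaces. -/
def tensorGrade {V W : Type u} [AddCommGroup V] [Module K V]
    [AddCommGroup W] [Module K W]
    (gV : G → Submodule K V) (gW : G → Submodule K W) (g : G) :
    Submodule K (V ⊗[K] W) :=
  ⨆ (p : G × G) (_ : p.1 * p.2 = g),
    Submodule.span K
      (Set.image2 (fun v w => v ⊗ₜ[K] w) (gV p.1 : Set V) (gW p.2 : Set W))

/-- Iterated tensor powers `V^{⊗ m}` (with `V^{⊗ 0} = K`). -/
noncomputable def powBMod (W : BMod K) : ℕ → BMod K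
  | 0 => ⟨K⟩
  | (m + 1) => ⟨TensorProduct K (powBMod W m).carrier W.carrier⟩

/-- The `G`-representation on `V^{⊗ m}`. -/
noncomputable def powRep (W : BMod K) (ρW : Representation K G W.carrier) :
    (m : ℕ) → Representation K G (powBMod W m).carrier
  | 0 => Representation.trivial K G _
  | (m + 1) => (powRep W ρW m).tprod ρW

/-- The `G`-grading of `V^{⊗ m}` (with `K` in degree `1`). -/
noncomputable def powGrade (W : BMod K) (gW : G → Submodule K W.carrier) :
    (m : ℕ) → G → Submodule K (powBMod W m).carrier
  | 0 => fun g => ⨆ (_ : g = (1 : G)), (⊤ : Submodule K K)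
  | (m + 1) => tensorGrade (powGrade W gW m) gW

/-- The `G`-grading of the dual module: `(V^*)_g` consists of the functionals
vanishing on `V_h` for all `h ≠ g⁻¹`. -/
def dualGrade {V : Type u} [AddCommGroup V] [Module K V]
    (gV : G → Submodule K V) (g : G) : Submodule K (Module.Dual K V) :=
  ⨅ (h : G) (_ : h ≠ g⁻¹), (gV h).dualAnnihilator

end YD

section Aux

variable {K : Type u} [Field K]

private lemma exists_dual_one {V : Type u} [AddCommGroup V] [Module K V] {x : V}
    (hx : x ≠ 0) : ∃ f : Module.Dual K V, f x = 1 := by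
  have h : ¬ ∀ φ : Module.Dual K V, φ x = 0 := by
    rw [Module.forall_dual_apply_eq_zero_iff K x]; exact hx
  push_neg at h
  obtain ⟨φ, hφ⟩ := h
  exact ⟨(φ x)⁻¹ • φ, by simp [inv_mul_cancel₀ hφ]⟩

private lemma tmul_right_eq_zero {V W : Type u} [AddCommGroup V] [Module K V]
    [AddCommGroup W] [Module K W] {x : V} {z : W}
    (hx : x ≠ 0) (h : x ⊗ₜ[K] z = (0 : V ⊗[K] W)) : z = 0 := by
  obtain ⟨f, hf⟩ := exists_dual_one (K := K) hx
  let φ : V ⊗[K] W →ₗ[K] W := TensorProduct.lift ((LinearMap.lsmul K W).comp f)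
  have h2 : φ (x ⊗ₜ[K] z) = 0 := by rw [h, map_zero]
  simpa [φ, TensorProduct.lift.tmul, hf] using h2

private lemma tmul_eq_tmul_exists_smul {V W : Type u} [AddCommGroup V] [Module K V]
    [AddCommGroup W] [Module K W] {x x' : V} {y y' : W}
    (hx : x ≠ 0) (hy : y ≠ 0) (h : x ⊗ₜ[K] y = x' ⊗ₜ[K] y') :
    ∃ c : K, c ≠ 0 ∧ x' = c • x ∧ y' = c⁻¹ • y := by
  obtain ⟨f, hf⟩ := exists_dual_one (K := K) hy
  let ψ : V ⊗[K] W →ₗ[K] V :=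
    TensorProduct.lift (LinearMap.mk₂ K (fun a b => f b • a)
      (fun a a' b => smul_add _ _ _)
      (fun c a b => smul_comm _ _ _)
      (fun a b b' => by simp [add_smul])
      (fun c a b => by simp [mul_smul]))
  have h1 : x = f y' • x' := by
    have h2 : ψ (x ⊗ₜ[K] y) = ψ (x' ⊗ₜ[K] y') := by rw [h]
    simpa [ψ, TensorProduct.lift.tmul, LinearMap.mk₂_apply, hf] using h2
  set d := f y' with hdd
  have hd : d ≠ 0 := by
    intro hd0
    rw [hd0, zero_smul] at h1
    exact hx h1
  have hx' : x' = d⁻¹ • x := by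
    rw [h1, smul_smul, inv_mul_cancel₀ hd, one_smul]
  have h2 : x ⊗ₜ[K] (y - d⁻¹ • y') = 0 := by
    rw [TensorProduct.tmul_sub, sub_eq_zero, ← TensorProduct.smul_tmul, ← hx', h]
  have h3 : y = d⁻¹ • y' := sub_eq_zero.mp (tmul_right_eq_zero hx h2)
  have hy' : y' = d • y := by
    rw [h3, smul_smul, mul_inv_cancel₀ hd, one_smul]
  refine ⟨d⁻¹, inv_ne_zero hd, hx', by rw [inv_inv]; exact hy'⟩

private lemma grade_unique {G V : Type u} [DecidableEq G] [AddCommGroup V] [Module K V]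
    {gr : G → Submodule K V} (hint : DirectSum.IsInternal gr)
    {a b : G} {x : V} (hx : x ≠ 0) (ha : x ∈ gr a) (hb : x ∈ gr b) : a = b := by
  by_contra hab
  have hind := hint.submodule_iSupIndep a
  have hle : gr b ≤ ⨆ j, ⨆ (_ : j ≠ a), gr j :=
    le_iSup_of_le b (le_iSup_of_le (Ne.symm hab) le_rfl)
  exact hx (Submodule.disjoint_def.mp hind x ha (hle hb))

variable {G : Type u} [Group G] [DecidableEq G]

private lemma scal {V U : Type u} [AddCommGroup V] [Module K V]
    [AddCommGroup U] [Module K U]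
    {ρV : Representation K G V} {gV : G → Submodule K V}
    {ρk : Representation K G U} {grk : G → Submodule K U}
    (hintk : DirectSum.IsInternal grk)
    (hcomp : ∀ (g h : G), ∀ u ∈ grk h, ρk g u ∈ grk (g * h * g⁻¹))
    (hcs : CSqId ρV gV ρk grk)
    {a h : G} {v : V} {w : U} (hv : v ∈ gV a) (hw : w ∈ grk h)
    (hv0 : v ≠ 0) (hw0 : w ≠ 0) :
    a * h * a⁻¹ = h ∧ ∃ c : K, c ≠ 0 ∧ ρV h v = c • v ∧ ρk a w = c⁻¹ • w := by
  obtain ⟨c, hc0, hvv, hww⟩ := tmul_eq_tmul_exists_smul hv0 hw0 (hcs a h v w hv hw)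
  have hmem : ρk a w ∈ grk (a * h * a⁻¹) := hcomp a h w hw
  have hmem' : ρk a w ∈ grk h := by
    rw [hww]; exact Submodule.smul_mem _ _ hw
  have hne : ρk a w ≠ 0 := by
    rw [hww]; exact smul_ne_zero (inv_ne_zero hc0) hw0
  have hah : a * h * a⁻¹ = h := grade_unique hintk hne hmem hmem'
  refine ⟨hah, c, hc0, ?_, hww⟩
  rw [← hah]; exact hvv

private lemma tens {V W U : Type u} [AddCommGroup V] [Module K V]
    [AddCommGroup W] [Module K W] [AddCommGroup U] [Module K U]
    {ρV : Representation K G V} {gV : G → Submodule K V}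
    {ρW : Representation K G W} {gW : G → Submodule K W}
    {ρk : Representation K G U} {grk : G → Submodule K U}
    (hintk : DirectSum.IsInternal grk)
    (hcomp : ∀ (g h : G), ∀ u ∈ grk h, ρk g u ∈ grk (g * h * g⁻¹))
    (hV : CSqId ρV gV ρk grk) (hW : CSqId ρW gW ρk grk) :
    CSqId (ρV.tprod ρW) (tensorGrade gV gW) ρk grk := by
  intro g h v w hv hw
  by_cases hw0 : w = 0
  · subst hw0; simp
  classical
  set L : V ⊗[K] W →ₗ[K] (V ⊗[K] W) ⊗[K] U :=
    (TensorProduct.mk K (V ⊗[K] W) U).flip w -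
      ((TensorProduct.mk K (V ⊗[K] W) U).flip (ρk g w)).comp
        ((ρV.tprod ρW) (g * h * g⁻¹)) with hL
  have hle : tensorGrade gV gW g ≤ LinearMap.ker L := by
    refine iSup_le fun p => iSup_le fun hp => Submodule.span_le.mpr ?_
    rintro t ⟨v₁, hv₁, v₂, hv₂, rfl⟩
    simp only [SetLike.mem_coe, LinearMap.mem_ker, hL, LinearMap.sub_apply,
      LinearMap.comp_apply, LinearMap.flip_apply, TensorProduct.mk_apply, sub_eq_zero,
      Representation.tprod_apply, TensorProduct.map_tmul]
    by_cases h1 : v₁ = 0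
    · subst h1; simp
    by_cases h2 : v₂ = 0
    · subst h2; simp
    obtain ⟨hah, c₁, hc₁, he₁, hk₁⟩ := scal hintk hcomp hV hv₁ hw h1 hw0
    obtain ⟨hbh, c₂, hc₂, he₂, hk₂⟩ := scal hintk hcomp hW hv₂ hw h2 hw0
    have hq : g * h * g⁻¹ = h := by
      rw [← hp, mul_inv_rev, show p.1 * p.2 * h * (p.2⁻¹ * p.1⁻¹)
          = p.1 * (p.2 * h * p.2⁻¹) * p.1⁻¹ by group, hbh, hah]
    have hg : ρk g w = c₂⁻¹ • c₁⁻¹ • w := by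
      rw [← hp, map_mul, Module.End.mul_apply, hk₂, map_smul, hk₁]
    rw [hq, he₁, he₂, hg, smul_smul, TensorProduct.smul_tmul_smul,
      TensorProduct.smul_tmul_smul, show c₁ * c₂ * (c₂⁻¹ * c₁⁻¹) = 1 by
        rw [← mul_assoc, mul_assoc c₁, mul_inv_cancel₀ hc₂, mul_one, mul_inv_cancel₀ hc₁],
      one_smul]
  have hker := hle hv
  simp only [LinearMap.mem_ker, hL, LinearMap.sub_apply, LinearMap.comp_apply,
    LinearMap.flip_apply, TensorProduct.mk_apply, sub_eq_zero] at hker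
  exact hker

private lemma pow_cs {U : Type u} [AddCommGroup U] [Module K U]
    (Wb : BMod K) (ρW : Representation K G Wb.carrier) (gW : G → Submodule K Wb.carrier)
    {ρk : Representation K G U} {grk : G → Submodule K U}
    (hintk : DirectSum.IsInternal grk)
    (hcomp : ∀ (g h : G), ∀ u ∈ grk h, ρk g u ∈ grk (g * h * g⁻¹))
    (hWk : CSqId ρW gW ρk grk) :
    ∀ m, CSqId (powRep Wb ρW m) (powGrade Wb gW m) ρk grk := by
  intro m
  induction m with
  | zero =>
    intro g h v w hv hw
    rcases eq_or_ne g 1 with rfl | hg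
    · simp [powRep, Representation.trivial_apply]
    · have hv0 : v = 0 := by
        have hbot : powGrade Wb gW 0 g = ⊥ := by
          simp [powGrade]; exact iSup_neg hg
        rw [hbot] at hv
        simpa using hv
      simp [hv0]
  | succ m ih =>
    show CSqId ((powRep Wb ρW m).tprod ρW) (tensorGrade (powGrade Wb gW m) gW) ρk grk
    exact tens hintk hcomp ih hWk

private lemma dual_cs {V U : Type u} [AddCommGroup V] [Module K V]
    [AddCommGroup U] [Module K U]
    {ρV : Representation K G V} {gV : G → Submodule K V}
    {ρk : Representation K G U} {grk : G → Submodule K U}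
    (hintV : DirectSum.IsInternal gV) (hintk : DirectSum.IsInternal grk)
    (hcompV : ∀ (g h : G), ∀ x ∈ gV h, ρV g x ∈ gV (g * h * g⁻¹))
    (hcompk : ∀ (g h : G), ∀ u ∈ grk h, ρk g u ∈ grk (g * h * g⁻¹))
    (hcs : CSqId ρV gV ρk grk) :
    CSqId ρV.dual (dualGrade gV) ρk grk := by
  intro g h f w hf hw
  by_cases hw0 : w = 0
  · subst hw0; simp
  by_cases hf0 : f = 0
  · subst hf0; simp
  have hfann : ∀ h' : G, h' ≠ g⁻¹ → ∀ x ∈ gV h', f x = 0 := by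
    intro h' hh' x hx
    have h1 := (Submodule.mem_iInf _).mp hf h'
    have h2 := (Submodule.mem_iInf _).mp h1 hh'
    exact (Submodule.mem_dualAnnihilator f).mp h2 x hx
  by_cases hex : ∃ x₀, x₀ ∈ gV g⁻¹ ∧ x₀ ≠ 0
  swap
  · push_neg at hex
    exfalso
    apply hf0
    ext x
    have hx : x ∈ ⨆ a, gV a := by rw [hintV.submodule_iSup_eq_top]; trivial
    refine Submodule.iSup_induction (motive := fun x => f x = 0) _ hx ?_ (map_zero f) ?_
    · intro a x hxa
      by_cases hag : a = g⁻¹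
      · rw [hex x (hag ▸ hxa), map_zero]
      · exact hfann a hag x hxa
    · intro x y hx hy
      rw [map_add, hx, hy, add_zero]
  obtain ⟨x₀, hx₀m, hx₀0⟩ := hex
  obtain ⟨hgh, c, hc0, -, hkw⟩ := scal hintk hcompk hcs hx₀m hw hx₀0 hw0
  rw [inv_inv] at hgh
  have hcomm : Commute h g := by
    have := congrArg (fun z => g * z) hgh
    simp only [← mul_assoc, mul_inv_cancel, one_mul] at this
    exact this
  have hgh' : g * h * g⁻¹ = h := by
    rw [← hcomm.eq, mul_assoc, mul_inv_cancel, mul_one]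
  have hgw : ρk g w = c • w := by
    have hid : ρk g (ρk g⁻¹ w) = w := by
      rw [← Module.End.mul_apply, ← map_mul, mul_inv_cancel, map_one, Module.End.one_apply]
    rw [hkw, map_smul] at hid
    calc ρk g w = c • c⁻¹ • ρk g w := by
          rw [smul_smul, mul_inv_cancel₀ hc0, one_smul]
      _ = c • w := by rw [hid]
  have hCL : ∀ x ∈ gV g⁻¹, ρV h x = c • x := by
    intro x hx
    by_cases hx0 : x = 0
    · simp [hx0]
    obtain ⟨-, c', hc'0, he', hk'⟩ := scal hintk hcompk hcs hx hw hx0 hw0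
    have hcc' : c'⁻¹ • w = c⁻¹ • w := by rw [← hk', hkw]
    have hcc : c' = c := by
      have h1 : (c'⁻¹ - c⁻¹) • w = 0 := by rw [sub_smul, hcc', sub_self]
      have h2 : c'⁻¹ - c⁻¹ = 0 := by
        by_contra hne
        exact hw0 ((smul_eq_zero.mp h1).resolve_left hne)
      have h3 : c'⁻¹ = c⁻¹ := sub_eq_zero.mp h2
      rw [← inv_inv c', h3, inv_inv]
    rw [he', hcc]
  have hinvCL : ∀ x ∈ gV g⁻¹, ρV h⁻¹ x = c⁻¹ • x := by
    intro x hx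
    have h1 : ρV h⁻¹ (ρV h x) = x := by
      rw [← Module.End.mul_apply, ← map_mul, inv_mul_cancel, map_one, Module.End.one_apply]
    rw [hCL x hx, map_smul] at h1
    calc ρV h⁻¹ x = c⁻¹ • c • ρV h⁻¹ x := by
          rw [smul_smul, inv_mul_cancel₀ hc0, one_smul]
      _ = c⁻¹ • x := by rw [h1]
  have hdual : ρV.dual (g * h * g⁻¹) f = c⁻¹ • f := by
    rw [hgh']
    ext x
    have hx : x ∈ ⨆ a, gV a := by rw [hintV.submodule_iSup_eq_top]; trivial
    refine Submodule.iSup_induction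
      (motive := fun x => (ρV.dual h f) x = (c⁻¹ • f) x) _ hx ?_ (by simp) ?_
    · intro a x hxa
      have hap : (ρV.dual h f) x = f (ρV h⁻¹ x) := by
        rw [Representation.dual_apply, Module.Dual.transpose_apply, LinearMap.comp_apply]
      by_cases hag : a = g⁻¹
      · subst hag
        rw [hap, hinvCL x hxa, map_smul, LinearMap.smul_apply]
      · have h1 : f x = 0 := hfann a hag x hxa
        have h2 : f (ρV h⁻¹ x) = 0 := by
          refine hfann (h⁻¹ * a * h⁻¹⁻¹) ?_ _ (hcompV h⁻¹ a x hxa)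
          rw [inv_inv]
          intro hEq
          apply hag
          have ha : a = h * (g⁻¹ * h⁻¹) := by
            have := congrArg (fun z => h * z * h⁻¹) hEq
            simpa [mul_assoc] using this
          rw [ha, ← mul_assoc, (hcomm.inv_right).eq, mul_assoc, mul_inv_cancel, mul_one]
        rw [hap, h2, LinearMap.smul_apply, h1, smul_zero]
    · intro x y hx hy
      rw [map_add, hx, map_add, hy]
  rw [hdual, hgw, TensorProduct.smul_tmul, smul_smul, inv_mul_cancel₀ hc0, one_smul]

end Aux

/-- Lemma `lem:disconnected`: let `M = (M₁,…,M_θ)` be a tuple of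
Yetter–Drinfeld modules over `G` (admitting integral Cartan entries), `J, K`
disjoint nonempty subsets of the index set, `i ∈ J`, and assume `a^M_{jk} = 0`
(i.e. `c² = id` on `M_j ⊗ M_k`, formalized as `CSqId`) for all `j ∈ J`,
`k ∈ K`.  Then `a^{R_i(M)}_{jk} = 0` for all `j ∈ J`, `k ∈ K`: the reflected
module `R_i(M)_j` is `(ad M_i)^{-a^M_{ij}}(M_j)`, a Yetter–Drinfeld submodule
of `M_i^{⊗ m} ⊗ M_j`, resp. `M_i^*` for `j = i`, and the condition `c² = id`
against `M_k` holds for the ambient modules `M_i^{⊗ m} ⊗ M_j` (for every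
`m : ℕ`) and `M_i^*`, hence on the submodules `R_i(M)_j`. -/
theorem stmt_16 {K : Type u} [Field K] {G : Type u} [Group G] [DecidableEq G]
    {θ : ℕ} (hθ : 2 ≤ θ)
    (M : Fin θ → BMod K)
    (ρ : ∀ j, Representation K G (M j).carrier)
    (gr : ∀ j, G → Submodule K (M j).carrier)
    (hint : ∀ j, DirectSum.IsInternal (gr j))
    (hcompat : ∀ j (g h : G), ∀ v ∈ gr j h, ρ j g v ∈ gr j (g * h * g⁻¹))
    (J Kset : Set (Fin θ)) (hJ : J.Nonempty) (hKset : Kset.Nonempty)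
    (hdisj : Disjoint J Kset) (i : Fin θ) (hi : i ∈ J)
    (hzero : ∀ j ∈ J, ∀ k ∈ Kset, CSqId (ρ j) (gr j) (ρ k) (gr k)) :
    ∀ j ∈ J, ∀ k ∈ Kset,
      (∀ m : ℕ,
        CSqId ((powRep (M i) (ρ i) m).tprod (ρ j))
          (tensorGrade (powGrade (M i) (gr i) m) (gr j)) (ρ k) (gr k)) ∧
      CSqId ((ρ i).dual) (dualGrade (gr i)) (ρ k) (gr k) := by
  intro j hj k hk
  have hik := hzero i hi k hk
  have hjk := hzero j hj k hk
  exact ⟨fun m => tens (hint k) (hcompat k)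
      (pow_cs (M i) (ρ i) (gr i) (hint k) (hcompat k) hik m) hjk,
    dual_cs (hint i) (hint k) (hcompat i) (hcompat k) hik⟩
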